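/- Let Λ = ℤ_p⟦T₁, T₂⟧ (the two-variable Iwasawa algebra, identified with Λ(G) for G ≅ ℤ_p²) and let Λ(H) = ℤ_p⟦T₂⟧ ⊆ Λ. If M is a finitely generated Λ-module that is also finitely generated as a Λ(H)-module, then M is a torsion Λ-module. -/

import Mathlib

open PowerSeries

section Aux
variable {A B : Type*} [CommRing A] [CommRing B]
variable {M : Type*} [AddCommGroup M]
  [Module B M] [Module A M]
  [Module.Finite A M]

/-- Multiplication by `t : B` as an `A`-linear endomorphism of `M`, where `A` acts on `M`
through the ring hom `ι : A →+* B` (expressed by the compatibility hypothesis `hsmul`). -/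
noncomputable def tSmul {A B : Type*} [CommRing A] [CommRing B] {M : Type*} [AddCommGroup M]
    [Module B M] [Module A M] (ι : A →+* B) (t : B)
    (hsmul : ∀ (a : A) (s : B) (m : M), (ι a * s) • m = a • (s • m)) :
    Module.End A M where
  toFun m := t • m
  map_add' m n := smul_add _ _ _
  map_smul' a m := by
    have h1 : ∀ (b : A) (x : M), (ι b) • x = b • x := fun b x => by
      simpa using hsmul b 1 x
    simp only [RingHom.id_apply]
    rw [← h1 a m, ← h1 a (t • m), smul_smul, smul_smul, mul_comm]

variable (ι : A →+* B) (t : B)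
variable (hsmul : ∀ (a : A) (s : B) (m : M), (ι a * s) • m = a • (s • m))

lemma tSmul_pow (n : ℕ) (x : M) : ((tSmul ι t hsmul)^n) x = (t^n) • x := by
  induction n with
  | zero => simp
  | succ k ih =>
    rw [pow_succ', Module.End.mul_apply, ih]
    show t • (t ^ k • x) = _
    rw [smul_smul, ← pow_succ']

lemma eval₂_smul_eq_aeval (q : Polynomial A) (x : M) :
    (Polynomial.eval₂ ι t q) • x = (Polynomial.aeval (tSmul ι t hsmul) q) x := by
  induction q using Polynomial.induction_on' with
  | add p q hp hq =>
    rw [Polynomial.eval₂_add, add_smul, hp, hq, map_add, LinearMap.add_apply]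
  | monomial n a =>
    rw [Polynomial.eval₂_monomial, Polynomial.aeval_monomial, Module.End.mul_apply,
      Module.algebraMap_end_apply, tSmul_pow, hsmul]

include hsmul in
lemma aux_torsion (hne : ∀ q : Polynomial A, q.Monic → Polynomial.eval₂ ι t q ∈
    nonZeroDivisors B) : Module.IsTorsion B M := by
  intro x
  obtain ⟨q, hq, hq0⟩ :=
    (Module.End.isIntegral (R := A) (M := M)).isIntegral (tSmul ι t hsmul)
  refine ⟨⟨Polynomial.eval₂ ι t q, hne q hq⟩, ?_⟩
  show (Polynomial.eval₂ ι t q) • x = 0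
  rw [eval₂_smul_eq_aeval ι t hsmul, Polynomial.aeval_def, hq0]
  rfl
end Aux

/-- Let `Λ = ℤ_p⟦T₁, T₂⟧` (realized as `(ℤ_p⟦T₂⟧)⟦T₁⟧`) be the two-variable Iwasawa algebra
and `Λ(H) = ℤ_p⟦T₂⟧ ⊆ Λ`.  If `M` is a finitely generated `Λ`-module which is also finitely
generated as a `Λ(H)`-module, then `M` is a torsion `Λ`-module. -/
theorem isTorsion_of_finite_over_subalgebra
    (p : ℕ) [Fact p.Prime]
    (M : Type*) [AddCommGroup M]
    [Module (PowerSeries (PowerSeries ℤ_[p])) M]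
    [Module (PowerSeries ℤ_[p]) M]
    [IsScalarTower (PowerSeries ℤ_[p]) (PowerSeries (PowerSeries ℤ_[p])) M]
    [Module.Finite (PowerSeries (PowerSeries ℤ_[p])) M]
    [Module.Finite (PowerSeries ℤ_[p]) M] :
    Module.IsTorsion (PowerSeries (PowerSeries ℤ_[p])) M := by
  set A := PowerSeries ℤ_[p]
  set B := PowerSeries A
  set ι : A →+* B := algebraMap A B
  -- the inner variable, viewed as a constant of the outer power series ring
  set t : B := C (PowerSeries.X : A) with ht
  apply aux_torsion (ι := ι) (t := t) (M := M)
  · intro a s m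
    rw [← Algebra.smul_def, smul_assoc]
  · intro q hq
    apply mem_nonZeroDivisors_of_ne_zero
    intro h0
    -- apply the constant coefficient (of the outer variable)
    have hι : (constantCoeff (R := A)).comp ι = (C (R := ℤ_[p])).comp (constantCoeff (R := ℤ_[p])) := by
      refine RingHom.ext fun a => ?_
      rw [RingHom.comp_apply, RingHom.comp_apply]
      show constantCoeff (R := A) (algebraMap A B a) = _
      rw [PowerSeries.algebraMap_apply'']
      rw [← coeff_zero_eq_constantCoeff_apply, PowerSeries.coeff_map,
        coeff_zero_eq_constantCoeff_apply, PowerSeries.C_eq_algebraMap]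
    have h1 : constantCoeff (R := A) (Polynomial.eval₂ ι t q) = 0 := by rw [h0]; simp
    rw [Polynomial.hom_eval₂, hι, ht, constantCoeff_C] at h1
    have h2 : ((q.map (constantCoeff : A →+* ℤ_[p])) : PowerSeries ℤ_[p]) = 0 := by
      rw [← Polynomial.eval₂_C_X_eq_coe, Polynomial.eval₂_map]
      exact h1
    have h3 := congrArg (PowerSeries.coeff (R := ℤ_[p]) q.natDegree) h2
    rw [Polynomial.coeff_coe, Polynomial.coeff_map, hq.coeff_natDegree, map_one, map_zero] at h3
    exact one_ne_zero h3
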